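/- arXiv:2208.03073 — 2 statements merged into one kernel-verified Lean document; each statement's English description precedes it below -/
import Mathlib

section
/- Let R be a commutative ring of characteristic p (p a prime, with p·1 = 0 in R). For every invertible R-module L, the base change of L along the Frobenius endomorphism x ↦ x^p of R is R-linearly isomorphic to the p-fold tensor power L^{⊗p} of L over R. -/
open scoped TensorProduct

universe u

/-- The codomain of a ring homomorphism `f : R →+* S`, viewed as an `R`-algebra via `f`,
so that `Along f ⊗[R] L` is the base change of an `R`-module `L` along `f`. -/
def Along {R S : Type*} [CommRing R] [CommRing S] (_f : R →+* S) : Type _ := S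

instance {R S : Type*} [CommRing R] [CommRing S] (f : R →+* S) : CommRing (Along f) :=
  inferInstanceAs (CommRing S)

instance {R S : Type*} [CommRing R] [CommRing S] (f : R →+* S) : Algebra R (Along f) :=
  RingHom.toAlgebra f

/-- `L` is an invertible `R`-module, i.e. it admits a tensor inverse `M`. -/
def IsInvertibleModule (R : Type u) (L : Type u) [CommRing R] [AddCommGroup L] [Module R L] :
    Prop :=
  ∃ (M : Type u) (_ : AddCommGroup M) (_ : Module R M), Nonempty ((L ⊗[R] M) ≃ₗ[R] R)

/-- The Frobenius endomorphism `x ↦ x ^ p` of a commutative ring `R` in which `p • 1 = 0`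
(`p` a prime). -/
def pthPowerHom (R : Type u) [CommRing R] (p : ℕ) (hp : p.Prime) (hchar : (p : R) = 0) :
    R →+* R where
  toFun x := x ^ p
  map_one' := one_pow p
  map_mul' x y := mul_pow x y p
  map_zero' := zero_pow hp.ne_zero
  map_add' x y := by
    obtain ⟨r, hr⟩ := exists_add_pow_prime_eq hp x y
    show (x + y) ^ p = x ^ p + y ^ p
    rw [hr, hchar, zero_mul, zero_mul, zero_mul, add_zero]

section Aux

variable {R : Type u} [CommRing R]

theorem exists_fin_tmul {L M : Type u} [AddCommGroup L] [Module R L] [AddCommGroup M] [Module R M]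
    (z : L ⊗[R] M) : ∃ (n : ℕ) (x : Fin n → L) (m : Fin n → M), z = ∑ i, x i ⊗ₜ[R] m i := by
  induction z using TensorProduct.induction_on with
  | zero => exact ⟨0, Fin.elim0, Fin.elim0, by simp⟩
  | tmul a b => exact ⟨1, fun _ => a, fun _ => b, by simp⟩
  | add u v hu hv =>
    obtain ⟨n, x, m, rfl⟩ := hu
    obtain ⟨n', x', m', rfl⟩ := hv
    refine ⟨n + n', Fin.append x x', Fin.append m m', ?_⟩
    rw [Fin.sum_univ_add]
    simp [Fin.append_left, Fin.append_right]

theorem submodule_eq_top_of_pairing {T M' : Type u} [AddCommGroup T] [Module R T]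
    [AddCommGroup M'] [Module R M'] (ψ : (T ⊗[R] M') ≃ₗ[R] R) (W : Submodule R T)
    (hJ : Ideal.span {r : R | ∃ w ∈ W, ∃ m : M', ψ (w ⊗ₜ[R] m) = r} = ⊤) : W = ⊤ := by
  set ρ : (W ⊗[R] M') →ₗ[R] (T ⊗[R] M') := (W.subtype).rTensor M' with hρdef
  have hρ : Function.Surjective ρ := by
    have key : ∀ r : R, ψ.symm r ∈ LinearMap.range ρ := by
      intro r
      have hr : r ∈ Ideal.span {r : R | ∃ w ∈ W, ∃ m : M', ψ (w ⊗ₜ[R] m) = r} := by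
        rw [hJ]; trivial
      induction hr using Submodule.span_induction with
      | mem s hs =>
        obtain ⟨w, hw, m, hm⟩ := hs
        refine ⟨(⟨w, hw⟩ : W) ⊗ₜ[R] m, ?_⟩
        rw [← hm]
        simp [hρdef]
      | zero => simp
      | add a b _ _ ha hb => rw [map_add]; exact Submodule.add_mem _ ha hb
      | smul a b _ hb => rw [map_smul]; exact Submodule.smul_mem _ _ hb
    intro u
    obtain ⟨v, hv⟩ := key (ψ u)
    exact ⟨v, hv.trans (ψ.symm_apply_apply u)⟩
  have hσ : Function.Surjective (ρ.rTensor T) := LinearMap.rTensor_surjective T hρ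
  let c : (M' ⊗[R] T) ≃ₗ[R] R := (TensorProduct.comm R M' T).trans ψ
  let κT : (T ⊗[R] (M' ⊗[R] T)) ≃ₗ[R] T :=
    (TensorProduct.congr (LinearEquiv.refl R T) c).trans (TensorProduct.rid R T)
  have hrange : ∀ u : W ⊗[R] (M' ⊗[R] T), κT ((W.subtype.rTensor (M' ⊗[R] T)) u) ∈ W := by
    intro u
    induction u using TensorProduct.induction_on with
    | zero => simp
    | tmul w v =>
      have : κT ((W.subtype.rTensor (M' ⊗[R] T)) (w ⊗ₜ[R] v)) = c v • (w : T) := by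
        simp [κT, TensorProduct.rid_tmul]
      rw [this]
      exact W.smul_mem _ w.2
    | add a b ha hb => rw [map_add, map_add]; exact W.add_mem ha hb
  have hfac : W.subtype.rTensor (M' ⊗[R] T) =
      (TensorProduct.assoc R T M' T).toLinearMap ∘ₗ (ρ.rTensor T) ∘ₗ
        (TensorProduct.assoc R W M' T).symm.toLinearMap := by
    apply TensorProduct.ext'
    intro w v
    induction v using TensorProduct.induction_on with
    | zero => simp
    | tmul m t => simp [hρdef]
    | add a b ha hb => simp only [TensorProduct.tmul_add, map_add, ha, hb]
  have hsurj : Function.Surjective (κT.toLinearMap ∘ₗ W.subtype.rTensor (M' ⊗[R] T)) := by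
    rw [hfac]
    exact κT.surjective.comp ((TensorProduct.assoc R T M' T).surjective.comp
      (hσ.comp (TensorProduct.assoc R W M' T).symm.surjective))
  rw [Submodule.eq_top_iff']
  intro t
  obtain ⟨u, hu⟩ := hsurj t
  have : κT ((LinearMap.rTensor (M' ⊗[R] T) W.subtype) u) = t := hu
  exact this ▸ hrange u

end Aux
section Aux2

variable {R : Type u} [CommRing R]
variable {L M : Type u} [AddCommGroup L] [Module R L] [AddCommGroup M] [Module R M]

noncomputable def pairing2 (e : (L ⊗[R] M) ≃ₗ[R] R) :
    ((L ⊗[R] L) ⊗[R] (M ⊗[R] M)) ≃ₗ[R] R :=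
  (TensorProduct.tensorTensorTensorComm R L L M M).trans
    ((TensorProduct.congr e e).trans (TensorProduct.lid R R))

theorem pairing2_apply (e : (L ⊗[R] M) ≃ₗ[R] R) (a b : L) (m m' : M) :
    pairing2 e ((a ⊗ₜ[R] b) ⊗ₜ[R] (m ⊗ₜ[R] m')) = e (a ⊗ₜ[R] m) * e (b ⊗ₜ[R] m') := by
  simp [pairing2, TensorProduct.tensorTensorTensorComm_tmul, TensorProduct.congr_tmul,
    TensorProduct.lid_tmul, smul_eq_mul]

/-- If an ideal contains a power of every value `e (l ⊗ m)`, it is the whole ring. -/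
theorem span_eq_top_of_pow_mem (e : (L ⊗[R] M) ≃ₗ[R] R) (gens : Set R) (k : ℕ)
    (hpow : ∀ (l : L) (m : M), (e (l ⊗ₜ[R] m)) ^ k ∈ Ideal.span gens) :
    Ideal.span gens = ⊤ := by
  by_contra h
  obtain ⟨P, hPmax, hle⟩ := Ideal.exists_le_maximal _ h
  obtain ⟨n, x, m, hxm⟩ := exists_fin_tmul (e.symm 1)
  have hone : (1 : R) = ∑ i, e (x i ⊗ₜ[R] m i) := by
    rw [← map_sum, ← hxm, e.apply_symm_apply]
  have h1 : (1 : R) ∈ P := by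
    rw [hone]
    refine Submodule.sum_mem _ fun i _ => ?_
    exact hPmax.isPrime.mem_of_pow_mem k (hle (hpow (x i) (m i)))
  exact hPmax.ne_top (Ideal.eq_top_of_isUnit_mem _ h1 isUnit_one)

theorem tmul_comm (e : (L ⊗[R] M) ≃ₗ[R] R) (a b : L) : a ⊗ₜ[R] b = b ⊗ₜ[R] a := by
  have hW : Submodule.span R {z : L ⊗[R] L | ∃ x : L, z = x ⊗ₜ[R] x} = ⊤ := by
    apply submodule_eq_top_of_pairing (pairing2 e)
    apply span_eq_top_of_pow_mem e _ 2
    intro l m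
    refine Ideal.subset_span ?_
    refine ⟨l ⊗ₜ[R] l, Submodule.subset_span ⟨l, rfl⟩, m ⊗ₜ[R] m, ?_⟩
    rw [pairing2_apply, pow_two]
  have key : ∀ z : L ⊗[R] L, (TensorProduct.comm R L L) z = z := by
    intro z
    have hz : z ∈ Submodule.span R {z : L ⊗[R] L | ∃ x : L, z = x ⊗ₜ[R] x} := by
      rw [hW]; trivial
    induction hz using Submodule.span_induction with
    | mem s hs => obtain ⟨x, rfl⟩ := hs; simp
    | zero => simp
    | add u v _ _ hu hv => rw [map_add, hu, hv]
    | smul r u _ hu => rw [map_smul, hu]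
  have := key (a ⊗ₜ[R] b)
  simpa using this.symm

/-- The fundamental rank-one identity. -/
theorem pairing_swap (e : (L ⊗[R] M) ≃ₗ[R] R) (x b : L) (m : M) :
    e (x ⊗ₜ[R] m) • b = e (b ⊗ₜ[R] m) • x := by
  let g : L →ₗ[R] R := e.toLinearMap ∘ₗ ((TensorProduct.mk R L M).flip m)
  let D : (L ⊗[R] L) →ₗ[R] L :=
    (TensorProduct.lid R L).toLinearMap ∘ₗ TensorProduct.map g LinearMap.id
  have hD : ∀ u v : L, D (u ⊗ₜ[R] v) = e (u ⊗ₜ[R] m) • v := by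
    intro u v
    simp [D, g, TensorProduct.lid_tmul]
  have := congrArg D (tmul_comm e x b)
  rwa [hD, hD] at this

theorem dual_basis_eq (e : (L ⊗[R] M) ≃ₗ[R] R) {n : ℕ} (x : Fin n → L) (m : Fin n → M)
    (hxm : e.symm 1 = ∑ i, x i ⊗ₜ[R] m i) (l : L) :
    ∑ i, e (l ⊗ₜ[R] m i) • x i = l := by
  have hone : (1 : R) = ∑ i, e (x i ⊗ₜ[R] m i) := by
    rw [← map_sum, ← hxm, e.apply_symm_apply]
  calc ∑ i, e (l ⊗ₜ[R] m i) • x i = ∑ i, e (x i ⊗ₜ[R] m i) • l := by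
        refine Finset.sum_congr rfl fun i _ => ?_
        exact (pairing_swap e (x i) l (m i)).symm
    _ = (∑ i, e (x i ⊗ₜ[R] m i)) • l := by rw [Finset.sum_smul]
    _ = l := by rw [← hone, one_smul]

end Aux2
section Aux3

open PiTensorProduct

variable {R : Type u} [CommRing R]
variable {L M : Type u} [AddCommGroup L] [Module R L] [AddCommGroup M] [Module R M]

theorem tprod_comp_swap (e : (L ⊗[R] M) ≃ₗ[R] R) {n : ℕ} (g : Fin n → L) (i j : Fin n)
    (hij : i ≠ j) :
    (tprod R (g ∘ Equiv.swap i j) : ⨂[R] (_ : Fin n), L) = tprod R g := by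
  classical
  let D : L →ₗ[R] L →ₗ[R] (⨂[R] (_ : Fin n), L) := LinearMap.mk₂ R
    (fun a b => PiTensorProduct.tprod R (Function.update (Function.update g i a) j b))
    (by
      intro a a' b
      show PiTensorProduct.tprod R (Function.update (Function.update g i (a + a')) j b)
          = PiTensorProduct.tprod R (Function.update (Function.update g i a) j b)
          + PiTensorProduct.tprod R (Function.update (Function.update g i a') j b)
      rw [Function.update_comm hij (a + a') b g, Function.update_comm hij a b g,
        Function.update_comm hij a' b g]
      exact MultilinearMap.map_update_add (PiTensorProduct.tprod R) (Function.update g j b) i a a')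
    (by
      intro c a b
      show PiTensorProduct.tprod R (Function.update (Function.update g i (c • a)) j b)
          = c • PiTensorProduct.tprod R (Function.update (Function.update g i a) j b)
      rw [Function.update_comm hij (c • a) b g, Function.update_comm hij a b g]
      exact MultilinearMap.map_update_smul (PiTensorProduct.tprod R) (Function.update g j b) i c a)
    (by
      intro a b b'
      show PiTensorProduct.tprod R (Function.update (Function.update g i a) j (b + b'))
          = PiTensorProduct.tprod R (Function.update (Function.update g i a) j b)
          + PiTensorProduct.tprod R (Function.update (Function.update g i a) j b')
      exact MultilinearMap.map_update_add (PiTensorProduct.tprod R) (Function.update g i a) j b b')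
    (by
      intro c a b
      show PiTensorProduct.tprod R (Function.update (Function.update g i a) j (c • b))
          = c • PiTensorProduct.tprod R (Function.update (Function.update g i a) j b)
      exact MultilinearMap.map_update_smul (PiTensorProduct.tprod R) (Function.update g i a) j c b)
  have h := congrArg (TensorProduct.lift D) (tmul_comm e (g i) (g j))
  simp only [TensorProduct.lift.tmul] at h
  have hD : ∀ a b : L, D a b = tprod R (Function.update (Function.update g i a) j b) :=
    fun a b => rfl
  rw [hD, hD] at h
  have h1 : Function.update (Function.update g i (g i)) j (g j) = g := by
    rw [Function.update_eq_self, Function.update_eq_self]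
  have h2 : Function.update (Function.update g i (g j)) j (g i) = g ∘ Equiv.swap i j := by
    funext k
    rcases eq_or_ne k j with rfl | hkj
    · rw [Function.update_self]
      simp [Equiv.swap_apply_right]
    · rw [Function.update_of_ne hkj]
      rcases eq_or_ne k i with rfl | hki
      · rw [Function.update_self]
        simp [Equiv.swap_apply_left]
      · rw [Function.update_of_ne hki]
        simp [Equiv.swap_apply_of_ne_of_ne hki hkj]
  rw [h1, h2] at h
  exact h.symm

theorem tprod_comp_perm (e : (L ⊗[R] M) ≃ₗ[R] R) {n : ℕ} (σ : Equiv.Perm (Fin n))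
    (g : Fin n → L) :
    (tprod R (g ∘ σ) : ⨂[R] (_ : Fin n), L) = tprod R g := by
  refine Equiv.Perm.swap_induction_on
    (motive := fun τ : Equiv.Perm (Fin n) => ∀ h : Fin n → L,
      (tprod R (h ∘ τ) : ⨂[R] (_ : Fin n), L) = tprod R h) σ (fun h => by
        rw [show h ∘ ⇑(1 : Equiv.Perm (Fin n)) = h from rfl]) ?_ g
  intro f x y hxy ih h
  have h1 : h ∘ ⇑(Equiv.swap x y * f) = (h ∘ Equiv.swap x y) ∘ f := rfl
  rw [h1, ih (h ∘ Equiv.swap x y), tprod_comp_swap e h x y hxy]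

theorem tprod_word_eq (e : (L ⊗[R] M) ≃ₗ[R] R) {n : ℕ} (a b : L) (S S' : Finset (Fin n))
    (h : S.card = S'.card) :
    (tprod R (fun i => if i ∈ S then a else b) : ⨂[R] (_ : Fin n), L)
      = tprod R (fun i => if i ∈ S' then a else b) := by
  classical
  have hc : Sᶜ.card = S'ᶜ.card := by rw [Finset.card_compl, Finset.card_compl, h]
  let e₁ : {i // i ∈ S} ≃ {i // i ∈ S'} := Finset.equivOfCardEq h
  let e₂ : {i // ¬ i ∈ S} ≃ {i // ¬ i ∈ S'} :=
    ((Equiv.subtypeEquivRight (fun i => (Finset.mem_compl (s := S) (a := i)).symm)).trans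
      (Finset.equivOfCardEq hc)).trans
      (Equiv.subtypeEquivRight (fun i => Finset.mem_compl (s := S') (a := i)))
  let σ : Equiv.Perm (Fin n) := Equiv.subtypeCongr e₁ e₂
  have hσ : ∀ i, (σ i ∈ S' ↔ i ∈ S) := by
    intro i
    by_cases hi : i ∈ S
    · have : σ i = (e₁ ⟨i, hi⟩ : Fin n) := by
        simp [σ, Equiv.subtypeCongr, hi]
      rw [this]
      exact iff_of_true (e₁ ⟨i, hi⟩).2 hi
    · have : σ i = (e₂ ⟨i, hi⟩ : Fin n) := by
        simp [σ, Equiv.subtypeCongr, hi]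
      rw [this]
      exact iff_of_false (e₂ ⟨i, hi⟩).2 hi
  have hfun : (fun i => if i ∈ S' then a else b) ∘ σ = fun i => if i ∈ S then a else b := by
    funext i
    simp only [Function.comp_apply]
    by_cases hi : i ∈ S
    · rw [if_pos ((hσ i).mpr hi), if_pos hi]
    · rw [if_neg (fun hcon => hi ((hσ i).mp hcon)), if_neg hi]
  rw [← hfun, tprod_comp_perm e σ]

end Aux3
section Aux4

open PiTensorProduct

variable {R : Type u} [CommRing R]
variable {L M : Type u} [AddCommGroup L] [Module R L] [AddCommGroup M] [Module R M]

theorem tprod_const_smul {n : ℕ} (r : R) (l : L) :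
    (tprod R (fun _ : Fin n => r • l) : ⨂[R] (_ : Fin n), L)
      = r ^ n • tprod R (fun _ : Fin n => l) := by
  have h := MultilinearMap.map_smul_univ (tprod R (s := fun _ : Fin n => L))
    (fun _ => r) (fun _ => l)
  simpa [Finset.prod_const, Finset.card_univ] using h

theorem tprod_const_add (e : (L ⊗[R] M) ≃ₗ[R] R) (p : ℕ) (hp : p.Prime) (hchar : (p : R) = 0)
    (a b : L) :
    (tprod R (fun _ : Fin p => a + b) : ⨂[R] (_ : Fin p), L)
      = tprod R (fun _ : Fin p => a) + tprod R (fun _ : Fin p => b) := by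
  classical
  have h0 : (tprod R (fun _ : Fin p => a + b) : ⨂[R] (_ : Fin p), L)
      = tprod R ((fun _ : Fin p => a) + (fun _ : Fin p => b)) := rfl
  rw [h0, MultilinearMap.map_add_univ]
  have hpw : ∀ s : Finset (Fin p),
      (tprod R (s.piecewise (fun _ : Fin p => a) fun _ : Fin p => b) : ⨂[R] (_ : Fin p), L)
        = tprod R (fun i => if i ∈ s then a else b) := fun s => rfl
  calc (∑ s : Finset (Fin p), (tprod R (s.piecewise (fun _ => a) fun _ => b) : ⨂[R] (_ : Fin p), L))
      = ∑ s ∈ (Finset.univ : Finset (Fin p)).powerset,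
          (tprod R (fun i => if i ∈ s then a else b) : ⨂[R] (_ : Fin p), L) := by
        rw [Finset.powerset_univ]
        exact Finset.sum_congr rfl fun s _ => hpw s
    _ = ∑ k ∈ Finset.range (p + 1), ∑ s ∈ Finset.powersetCard k (Finset.univ : Finset (Fin p)),
          (tprod R (fun i => if i ∈ s then a else b) : ⨂[R] (_ : Fin p), L) := by
        rw [Finset.sum_powerset, Finset.card_fin]
    _ = ∑ k ∈ ({0, p} : Finset ℕ), ∑ s ∈ Finset.powersetCard k (Finset.univ : Finset (Fin p)),
          (tprod R (fun i => if i ∈ s then a else b) : ⨂[R] (_ : Fin p), L) := by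
        refine (Finset.sum_subset ?_ ?_).symm
        · intro k hk
          simp only [Finset.mem_insert, Finset.mem_singleton] at hk
          rcases hk with rfl | rfl
          · simp
          · simp [Finset.mem_range]
        · intro k hk hknot
          simp only [Finset.mem_insert, Finset.mem_singleton, not_or] at hknot
          obtain ⟨hk0, hkp⟩ := hknot
          have hklt : k < p := by
            have := Finset.mem_range.mp hk
            omega
          obtain ⟨S₀, _, hS₀⟩ := Finset.exists_subset_card_eq (s := (Finset.univ : Finset (Fin p))) (n := k)
            (by rw [Finset.card_fin]; omega)
          have hcongr : ∀ s ∈ Finset.powersetCard k (Finset.univ : Finset (Fin p)),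
              (tprod R (fun i => if i ∈ s then a else b) : ⨂[R] (_ : Fin p), L)
                = tprod R (fun i => if i ∈ S₀ then a else b) := by
            intro s hs
            exact tprod_word_eq e a b s S₀ (by
              rw [(Finset.mem_powersetCard.mp hs).2, hS₀])
          rw [Finset.sum_congr rfl hcongr, Finset.sum_const, Finset.card_powersetCard,
            Finset.card_fin]
          obtain ⟨c, hc⟩ := hp.dvd_choose_self hk0 hklt
          rw [← Nat.cast_smul_eq_nsmul R, hc, Nat.cast_mul, hchar, zero_mul, zero_smul]
    _ = tprod R (fun _ : Fin p => a) + tprod R (fun _ : Fin p => b) := by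
        rw [Finset.sum_pair (Nat.Prime.ne_zero hp).symm]
        have hzero : (∑ s ∈ Finset.powersetCard 0 (Finset.univ : Finset (Fin p)),
            (tprod R (fun i => if i ∈ s then a else b) : ⨂[R] (_ : Fin p), L))
            = tprod R (fun _ : Fin p => b) := by
          rw [Finset.powersetCard_zero, Finset.sum_singleton]
          exact congrArg (PiTensorProduct.tprod R) (funext fun i => by simp)
        have htop : (∑ s ∈ Finset.powersetCard p (Finset.univ : Finset (Fin p)),
            (tprod R (fun i => if i ∈ s then a else b) : ⨂[R] (_ : Fin p), L))
            = tprod R (fun _ : Fin p => a) := by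
          have hcard : Finset.powersetCard p (Finset.univ : Finset (Fin p))
              = {(Finset.univ : Finset (Fin p))} := by
            have := Finset.powersetCard_self (Finset.univ : Finset (Fin p))
            rwa [Finset.card_fin] at this
          rw [hcard, Finset.sum_singleton]
          exact congrArg (PiTensorProduct.tprod R) (funext fun i => by simp)
        rw [hzero, htop, add_comm]

theorem span_tprod_const_eq_top (e : (L ⊗[R] M) ≃ₗ[R] R) (n : ℕ) :
    Submodule.span R (Set.range fun l : L => (tprod R (fun _ : Fin n => l) : ⨂[R] (_ : Fin n), L))
      = ⊤ := by
  set W := Submodule.span R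
    (Set.range fun l : L => (tprod R (fun _ : Fin n => l) : ⨂[R] (_ : Fin n), L)) with hWdef
  have hK : Ideal.span {r : R | ∃ (x : L) (m : M), r = e (x ⊗ₜ[R] m) ^ n} = ⊤ :=
    span_eq_top_of_pow_mem e _ n (fun l m => Ideal.subset_span ⟨l, m, rfl⟩)
  have hmem : ∀ (x : L) (m : M) (t : ⨂[R] (_ : Fin n), L), e (x ⊗ₜ[R] m) ^ n • t ∈ W := by
    intro x m t
    induction t using PiTensorProduct.induction_on with
    | smul_tprod r g =>
      rw [smul_comm]
      refine Submodule.smul_mem _ _ ?_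
      have h1 : e (x ⊗ₜ[R] m) ^ n • (tprod R g : ⨂[R] (_ : Fin n), L)
          = tprod R (fun i => e (x ⊗ₜ[R] m) • g i) := by
        rw [MultilinearMap.map_smul_univ]
        simp [Finset.prod_const, Finset.card_univ]
      rw [h1]
      have h2 : (fun i => e (x ⊗ₜ[R] m) • g i) = fun i => e (g i ⊗ₜ[R] m) • x :=
        funext fun i => pairing_swap e x (g i) m
      rw [h2, MultilinearMap.map_smul_univ]
      exact Submodule.smul_mem _ _ (Submodule.subset_span ⟨x, rfl⟩)
    | add u v hu hv =>
      rw [smul_add]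
      exact Submodule.add_mem _ hu hv
  rw [Submodule.eq_top_iff']
  intro t
  have h1 : (1 : R) ∈ Ideal.span {r : R | ∃ (x : L) (m : M), r = e (x ⊗ₜ[R] m) ^ n} := by
    rw [hK]; trivial
  obtain ⟨k, f, g, hsum⟩ := Submodule.mem_span_set'.mp h1
  have ht : t = ∑ i, f i • ((g i : R) • t) := by
    calc t = (1 : R) • t := (one_smul R t).symm
      _ = (∑ i, f i • (g i : R)) • t := by rw [hsum]
      _ = ∑ i, (f i • (g i : R)) • t := by rw [Finset.sum_smul]
      _ = ∑ i, f i • ((g i : R) • t) := Finset.sum_congr rfl fun i _ => by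
          rw [smul_eq_mul, mul_smul]
  have hmem' : (∑ i, f i • ((g i : R) • t)) ∈ W := by
    refine Submodule.sum_mem _ fun i _ => Submodule.smul_mem _ _ ?_
    obtain ⟨x, m, hxm⟩ := (g i).2
    rw [hxm]
    exact hmem x m t
  rw [ht]
  exact hmem'

end Aux4
/-- For a commutative ring `R` of characteristic `p` (a prime, with `p • 1 = 0` in `R`),
the base change of any invertible `R`-module `L` along the Frobenius endomorphism
`x ↦ x ^ p` of `R` is `R`-linearly isomorphic to the `p`-fold tensor power of `L` over `R`. -/
theorem base_change_along_frobenius (R : Type u) [CommRing R]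
    (p : ℕ) (hp : p.Prime) (hchar : (p : R) = 0)
    (L : Type u) [AddCommGroup L] [Module R L] (hL : IsInvertibleModule R L) :
    letI : Module (Along (pthPowerHom R p hp hchar)) (⨂[R] (_ : Fin p), L) :=
      inferInstanceAs (Module R (⨂[R] (_ : Fin p), L))
    Nonempty ((Along (pthPowerHom R p hp hchar) ⊗[R] L) ≃ₗ[Along (pthPowerHom R p hp hchar)]
      (⨂[R] (_ : Fin p), L)) := by
  classical
  obtain ⟨M, iM1, iM2, ⟨e⟩⟩ := hL
  obtain ⟨nn, xx, mm, hxm⟩ := exists_fin_tmul (e.symm 1)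
  set A := Along (pthPowerHom R p hp hchar) with hA
  set T := (⨂[R] (_ : Fin p), L) with hT
  letI instAT : Module A T := (inferInstance : Module R T)
  let q : L → T := fun l => PiTensorProduct.tprod R (fun _ => l)
  have hq_add : ∀ a b : L, q (a + b) = q a + q b := fun a b => tprod_const_add e p hp hchar a b
  have hq_smul : ∀ (r : R) (l : L), q (r • l) = r ^ p • q l := fun r l => tprod_const_smul r l
  have hq0 : q 0 = 0 := by
    have h := hq_add 0 0
    rw [add_zero] at h
    exact (left_eq_add.mp h)
  have hAsmul : ∀ (r : R) (s : A), r • s = (show A from r ^ p) * s := by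
    intro r s
    rw [Algebra.smul_def]
    rfl
  -- the additive lift
  let binner : A → L →+ T := fun s =>
    { toFun := fun l => s • q l
      map_zero' := by
        show s • q 0 = 0
        rw [hq0, smul_zero]
      map_add' := fun l l' => by
        show s • q (l + l') = s • q l + s • q l'
        rw [hq_add, smul_add] }
  let b : A →+ (L →+ T) :=
    { toFun := binner
      map_zero' := by
        ext l
        show (0 : A) • q l = 0
        exact zero_smul A (q l)
      map_add' := fun s s' => by
        ext l
        show (s + s') • q l = s • q l + s' • q l
        exact add_smul s s' (q l) }
  have hbal : ∀ (r : R) (s : A) (l : L), b (r • s) l = b s (r • l) := by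
    intro r s l
    show (r • s) • q l = s • q (r • l)
    rw [hq_smul, hAsmul, mul_comm, mul_smul]
    rfl
  let β₀ : (A ⊗[R] L) →+ T := TensorProduct.liftAddHom b hbal
  have hβ₀ : ∀ (s : A) (l : L), β₀ (s ⊗ₜ[R] l) = s • q l := fun s l =>
    TensorProduct.liftAddHom_tmul b hbal s l
  let β : (A ⊗[R] L) →ₗ[A] T :=
    { toFun := β₀
      map_add' := β₀.map_add
      map_smul' := by
        intro s z
        simp only [RingHom.id_apply]
        induction z using TensorProduct.induction_on with
        | zero => rw [smul_zero, map_zero, smul_zero]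
        | tmul t l =>
          rw [TensorProduct.smul_tmul', smul_eq_mul, hβ₀, hβ₀, mul_smul]
        | add u v hu hv => rw [smul_add, map_add, hu, hv, map_add, smul_add] }
  have hβ : ∀ (s : A) (l : L), β (s ⊗ₜ[R] l) = s • q l := hβ₀
  -- contraction functionals
  let C : M → (T →ₗ[R] R) := fun m => PiTensorProduct.lift
    ((MultilinearMap.mkPiAlgebra R (Fin p) R).compLinearMap
      (fun _ => e.toLinearMap ∘ₗ ((TensorProduct.mk R L M).flip m)))
  have hC : ∀ (m : M) (g : Fin p → L),
      C m (PiTensorProduct.tprod R g) = ∏ i, e (g i ⊗ₜ[R] m) := by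
    intro m g
    show PiTensorProduct.lift
      ((MultilinearMap.mkPiAlgebra R (Fin p) R).compLinearMap
        (fun _ => e.toLinearMap ∘ₗ ((TensorProduct.mk R L M).flip m)))
      (PiTensorProduct.tprod R g) = ∏ i, e (g i ⊗ₜ[R] m)
    rw [PiTensorProduct.lift.tprod]
    simp [MultilinearMap.compLinearMap_apply, MultilinearMap.mkPiAlgebra_apply]
  have hCq : ∀ (m : M) (l : L), C m (q l) = e (l ⊗ₜ[R] m) ^ p := by
    intro m l
    rw [hC]
    simp [Finset.prod_const, Finset.card_univ]
  -- reconstruction identity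
  have hrec : ∀ z : A ⊗[R] L, z = ∑ i, (show A from C (mm i) (β z)) ⊗ₜ[R] xx i := by
    intro z
    induction z using TensorProduct.induction_on with
    | zero =>
      simp
      exact (Finset.sum_eq_zero fun i _ => TensorProduct.zero_tmul _ _).symm
    | tmul s l =>
      rw [hβ]
      have h2 : ∀ i, C (mm i) (s • q l) = (show R from s) * e (l ⊗ₜ[R] mm i) ^ p := by
        intro i
        have h3 : (s • q l : T) = (show R from s) • q l := rfl
        rw [h3, map_smul, hCq, smul_eq_mul]
      calc s ⊗ₜ[R] l = s ⊗ₜ[R] (∑ i, e (l ⊗ₜ[R] mm i) • xx i) := by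
            rw [dual_basis_eq e xx mm hxm l]
        _ = ∑ i, s ⊗ₜ[R] (e (l ⊗ₜ[R] mm i) • xx i) := by rw [TensorProduct.tmul_sum]
        _ = ∑ i, (show A from C (mm i) (β (s ⊗ₜ[R] l))) ⊗ₜ[R] xx i := by
            refine Finset.sum_congr rfl fun i _ => ?_
            rw [hβ, h2 i, ← TensorProduct.smul_tmul]
            congr 1
            rw [hAsmul]
            exact mul_comm _ _
    | add u v hu hv =>
      conv_lhs => rw [hu, hv]
      rw [← Finset.sum_add_distrib]
      rw [map_add]
      refine Finset.sum_congr rfl fun i _ => ?_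
      rw [map_add, ← TensorProduct.add_tmul]
      rfl
  have hinj : Function.Injective β := by
    intro z₁ z₂ hz
    have h0 : β (z₁ - z₂) = 0 := by rw [map_sub, hz, sub_self]
    have h1 := hrec (z₁ - z₂)
    rw [h0] at h1
    simp only [map_zero] at h1
    have h2 : z₁ - z₂ = 0 := by
      rw [h1]
      refine Finset.sum_eq_zero fun i _ => ?_
      exact TensorProduct.zero_tmul _ _
    exact sub_eq_zero.mp h2
  have hsurj : Function.Surjective β := by
    intro t
    have ht : t ∈ Submodule.span R
        (Set.range fun l : L => (PiTensorProduct.tprod R (fun _ : Fin p => l)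
          : ⨂[R] (_ : Fin p), L)) := by
      rw [span_tprod_const_eq_top e p]; trivial
    induction ht using Submodule.span_induction with
    | mem t' ht' =>
      obtain ⟨l, rfl⟩ := ht'
      exact ⟨(1 : A) ⊗ₜ[R] l, by rw [hβ, one_smul]⟩
    | zero => exact ⟨0, map_zero β⟩
    | add u v _ _ hu hv =>
      obtain ⟨z, rfl⟩ := hu
      obtain ⟨z', rfl⟩ := hv
      exact ⟨z + z', map_add β z z'⟩
    | smul r t' _ ht' =>
      obtain ⟨z, rfl⟩ := ht'
      exact ⟨(show A from r) • z, map_smul β (show A from r) z⟩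
  exact ⟨LinearEquiv.ofBijective β ⟨hinj, hsurj⟩⟩
end

section
/- Let κ be a perfect commutative ring of characteristic p, i.e., p·1 = 0 in κ and the Frobenius endomorphism x ↦ x^p is bijective. If L is an invertible κ-module whose p-fold tensor power L^{⊗p} over κ is κ-linearly isomorphic to κ, then L itself is κ-linearly isomorphic to κ. -/
open scoped TensorProduct

universe u

section Aux

variable {p : ℕ} {κ : Type u} [CommRing κ]
variable {L : Type u} [AddCommGroup L] [Module κ L]
variable {M : Type u} [AddCommGroup M] [Module κ M]

theorem factC (eM : (L ⊗[κ] M) ≃ₗ[κ] κ) (z w : L ⊗[κ] M) :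
    eM z • w = eM w • z := by
  have hz : z = eM z • eM.symm 1 := by
    rw [← map_smul, smul_eq_mul, mul_one, eM.symm_apply_apply]
  have hw : w = eM w • eM.symm 1 := by
    rw [← map_smul, smul_eq_mul, mul_one, eM.symm_apply_apply]
  conv_lhs => rw [hw]
  conv_rhs => rw [hz]
  rw [smul_smul, smul_smul, mul_comm]

/-- the bilinear pairing -/

noncomputable def fm (eM : (L ⊗[κ] M) ≃ₗ[κ] κ) (b : L) : M →ₗ[κ] κ :=
  eM.toLinearMap ∘ₗ (TensorProduct.mk κ L M b)

@[simp] theorem fm_apply (eM : (L ⊗[κ] M) ≃ₗ[κ] κ) (b : L) (m : M) :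
    fm eM b m = eM (b ⊗ₜ[κ] m) := rfl

noncomputable def gm (eM : (L ⊗[κ] M) ≃ₗ[κ] κ) (m : M) : L →ₗ[κ] κ :=
  eM.toLinearMap ∘ₗ ((TensorProduct.mk κ L M).flip m)

@[simp] theorem gm_apply (eM : (L ⊗[κ] M) ≃ₗ[κ] κ) (m : M) (a : L) :
    gm eM m a = eM (a ⊗ₜ[κ] m) := rfl

/-- The identity (*) -/

theorem star_id (eM : (L ⊗[κ] M) ≃ₗ[κ] κ) (u v v' : L) (m m' mt : M) :
    eM (u ⊗ₜ mt) * (eM (v ⊗ₜ m) * eM (v' ⊗ₜ m')) =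
      eM (v ⊗ₜ m') * (eM (u ⊗ₜ m) * eM (v' ⊗ₜ mt)) := by
  have hC := factC eM (u ⊗ₜ mt) (v ⊗ₜ m')
  have H : L ⊗[κ] M →ₗ[κ] κ :=
    (LinearMap.mul' κ κ) ∘ₗ (TensorProduct.map (gm eM m) (fm eM v'))
  let H' : L ⊗[κ] M →ₗ[κ] κ :=
    (LinearMap.mul' κ κ) ∘ₗ (TensorProduct.map (gm eM m) (fm eM v'))
  have := congrArg H' hC
  simp only [map_smul, H', LinearMap.coe_comp, Function.comp_apply,
    TensorProduct.map_tmul, LinearMap.mul'_apply, gm_apply, fm_apply, smul_eq_mul] at this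
  exact this

theorem sq_zero (hp : p.Prime) (hperf : Function.Bijective (fun x : κ => x ^ p))
    {x : κ} (hx : x ^ 2 = 0) : x = 0 := by
  have hxp : x ^ p = 0 := by
    have : x ^ p = x ^ 2 * x ^ (p - 2) := by
      rw [← pow_add]
      congr 1
      have := hp.two_le
      omega
    rw [this, hx, zero_mul]
  have := hperf.injective (a₁ := x) (a₂ := 0)
  simp only [zero_pow hp.ne_zero] at this
  exact this hxp

theorem delta_sym (hp : p.Prime) (hperf : Function.Bijective (fun x : κ => x ^ p))
    (eM : (L ⊗[κ] M) ≃ₗ[κ] κ) (u v : L) (m m' : M) :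
    eM (u ⊗ₜ m) * eM (v ⊗ₜ m') = eM (v ⊗ₜ m) * eM (u ⊗ₜ m') := by
  set a := eM (u ⊗ₜ m) with ha
  set b := eM (u ⊗ₜ m') with hb
  set c := eM (v ⊗ₜ m) with hc
  set d := eM (v ⊗ₜ m') with hd
  -- R3 : d * (a * d) = b * (c * d)  from star_id (v,u,v,m,m',m')
  have R3 : d * (a * d) = b * (c * d) := star_id eM v u v m m' m'
  -- R4 : c * (a * d) = b * (c * c)  from star_id (v,u,v,m,m',m)
  have R4 : c * (a * d) = b * (c * c) := star_id eM v u v m m' m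
  have key : (a * d - c * b) ^ 2 = 0 := by linear_combination a * R3 - b * R4
  have := sq_zero hp hperf key
  linear_combination this

noncomputable def pair3 (eM : (L ⊗[κ] M) ≃ₗ[κ] κ) (b : L) : L ⊗[κ] M →ₗ[κ] L :=
  (TensorProduct.lid κ L).toLinearMap ∘ₗ
    (TensorProduct.map (fm eM b) LinearMap.id) ∘ₗ (TensorProduct.comm κ L M).toLinearMap

@[simp] theorem pair3_apply (eM : (L ⊗[κ] M) ≃ₗ[κ] κ) (b a : L) (m : M) :
    pair3 eM b (a ⊗ₜ m) = eM (b ⊗ₜ m) • a := by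
  simp [pair3, fm]

/-- separation -/

theorem sep (eM : (L ⊗[κ] M) ≃ₗ[κ] κ) {w : L}
    (hw : ∀ m : M, eM (w ⊗ₜ m) = 0) : w = 0 := by
  obtain ⟨S, hS⟩ := TensorProduct.exists_finset (eM.symm 1)
  have hone : ∑ i ∈ S, eM (i.1 ⊗ₜ[κ] i.2) = 1 := by
    rw [← map_sum, ← hS, eM.apply_symm_apply]
  have hzero : ∀ m : M, (w ⊗ₜ[κ] m) = 0 := by
    intro m
    have := hw m
    rw [← eM.map_zero] at this
    exact eM.injective this
  calc w = (∑ i ∈ S, eM (i.1 ⊗ₜ[κ] i.2)) • w := by rw [hone, one_smul]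
    _ = ∑ i ∈ S, eM (i.1 ⊗ₜ[κ] i.2) • w := Finset.sum_smul
    _ = ∑ i ∈ S, pair3 eM i.1 (w ⊗ₜ i.2) := by
        refine Finset.sum_congr rfl fun i _ => ?_
        rw [pair3_apply]
    _ = 0 := by
        refine Finset.sum_eq_zero fun i _ => ?_
        rw [hzero i.2, map_zero]

theorem rk1 (hp : p.Prime) (hperf : Function.Bijective (fun x : κ => x ^ p))
    (eM : (L ⊗[κ] M) ≃ₗ[κ] κ) (u v : L) (m : M) :
    eM (u ⊗ₜ m) • v = eM (v ⊗ₜ m) • u := by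
  have key : ∀ m' : M, eM ((eM (u ⊗ₜ m) • v - eM (v ⊗ₜ m) • u) ⊗ₜ[κ] m') = 0 := by
    intro m'
    rw [TensorProduct.sub_tmul, map_sub, ← TensorProduct.smul_tmul', map_smul,
      ← TensorProduct.smul_tmul', map_smul, smul_eq_mul, smul_eq_mul,
      delta_sym hp hperf eM u v m m', sub_self]
  exact sub_eq_zero.mp (sep eM key)

theorem bilin_symm (hp : p.Prime) (hperf : Function.Bijective (fun x : κ => x ^ p))
    (eM : (L ⊗[κ] M) ≃ₗ[κ] κ) (B : L →ₗ[κ] L →ₗ[κ] κ) (x y : L) :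
    B x y = B y x := by
  obtain ⟨S, hS⟩ := TensorProduct.exists_finset (eM.symm 1)
  have hone : ∑ i ∈ S, eM (i.1 ⊗ₜ[κ] i.2) = 1 := by
    rw [← map_sum, ← hS, eM.apply_symm_apply]
  have hT : ∀ x : L, ∑ i ∈ S, eM (x ⊗ₜ[κ] i.2) • i.1 = x := by
    intro x
    calc ∑ i ∈ S, eM (x ⊗ₜ[κ] i.2) • i.1 = ∑ i ∈ S, eM (i.1 ⊗ₜ[κ] i.2) • x :=
          Finset.sum_congr rfl fun i _ => rk1 hp hperf eM x i.1 i.2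
      _ = (∑ i ∈ S, eM (i.1 ⊗ₜ[κ] i.2)) • x := Finset.sum_smul.symm
      _ = x := by rw [hone, one_smul]
  have expand : ∀ x y : L, B x y =
      ∑ j ∈ S, ∑ i ∈ S, (eM (x ⊗ₜ[κ] i.2) * eM (y ⊗ₜ[κ] j.2)) * B i.1 j.1 := by
    intro x y
    conv_lhs => rw [← hT x, ← hT y]
    rw [map_sum]
    refine Finset.sum_congr rfl fun j _ => ?_
    rw [map_smul, map_sum, LinearMap.sum_apply, Finset.smul_sum]
    refine Finset.sum_congr rfl fun i _ => ?_
    rw [map_smul, LinearMap.smul_apply, smul_smul, smul_eq_mul]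
    ring
  rw [expand x y, expand y x]
  refine Finset.sum_congr rfl fun j _ => Finset.sum_congr rfl fun i _ => ?_
  rw [delta_sym hp hperf eM x y i.2 j.2]

theorem tprod_swap (hp : p.Prime) (hperf : Function.Bijective (fun x : κ => x ^ p))
    (eM : (L ⊗[κ] M) ≃ₗ[κ] κ) (e : (⨂[κ] (_ : Fin p), L) ≃ₗ[κ] κ)
    (v : Fin p → L) (i j : Fin p) :
    e (PiTensorProduct.tprod κ (v ∘ Equiv.swap i j)) = e (PiTensorProduct.tprod κ v) := by
  rcases eq_or_ne i j with rfl | hij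
  · simp
  have hB : ∀ x y : L, ∃ B : L →ₗ[κ] L →ₗ[κ] κ, (∀ a b : L,
      B a b = e (PiTensorProduct.tprod κ (Function.update (Function.update v i a) j b))) := by
    intro x y
    refine ⟨LinearMap.mk₂ κ
      (fun a b => e (PiTensorProduct.tprod κ (Function.update (Function.update v i a) j b)))
      ?_ ?_ ?_ ?_, fun a b => rfl⟩
    · intro a a' b
      rw [Function.update_comm hij, Function.update_comm hij, Function.update_comm hij,
        MultilinearMap.map_update_add, map_add]
    · intro c a b
      rw [Function.update_comm hij, Function.update_comm hij,
        MultilinearMap.map_update_smul, map_smul]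
    · intro a b b'
      rw [MultilinearMap.map_update_add, map_add]
    · intro c a b
      rw [MultilinearMap.map_update_smul, map_smul]
  obtain ⟨B, hBdef⟩ := hB (v i) (v j)
  have h1 : v ∘ Equiv.swap i j = Function.update (Function.update v i (v j)) j (v i) := by
    funext k
    rcases eq_or_ne k i with rfl | hki
    · simp [Function.update_of_ne hij, Equiv.swap_apply_left]
    rcases eq_or_ne k j with rfl | hkj
    · simp [Equiv.swap_apply_right]
    · simp [Function.comp_apply, Equiv.swap_apply_of_ne_of_ne hki hkj,
        Function.update_of_ne hkj, Function.update_of_ne hki]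
  have h2 : e (PiTensorProduct.tprod κ v) = B (v i) (v j) := by
    rw [hBdef, Function.update_eq_self, Function.update_eq_self]
  rw [h1, ← hBdef, bilin_symm hp hperf eM B, h2]

theorem tprod_perm (hp : p.Prime) (hperf : Function.Bijective (fun x : κ => x ^ p))
    (eM : (L ⊗[κ] M) ≃ₗ[κ] κ) (e : (⨂[κ] (_ : Fin p), L) ≃ₗ[κ] κ)
    (σ : Equiv.Perm (Fin p)) (v : Fin p → L) :
    e (PiTensorProduct.tprod κ (v ∘ σ)) = e (PiTensorProduct.tprod κ v) := by
  have H : ∀ σ : Equiv.Perm (Fin p), ∀ v : Fin p → L,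
      e (PiTensorProduct.tprod κ (v ∘ σ)) = e (PiTensorProduct.tprod κ v) := by
    intro σ
    refine Equiv.Perm.swap_induction_on σ (fun v => by simp [Function.comp_def]) ?_
    intro f x y hxy IH v
    have hcomp : v ∘ (Equiv.swap x y * f) = (v ∘ Equiv.swap x y) ∘ f := by
      funext k; simp [Equiv.Perm.mul_apply]
    rw [hcomp, IH (v ∘ Equiv.swap x y), tprod_swap hp hperf eM e v x y]
  exact H σ v

theorem tprod_card (hp : p.Prime) (hperf : Function.Bijective (fun x : κ => x ^ p))
    (eM : (L ⊗[κ] M) ≃ₗ[κ] κ) (e : (⨂[κ] (_ : Fin p), L) ≃ₗ[κ] κ)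
    (x y : L) {s s' : Finset (Fin p)} (hcard : s.card = s'.card) :
    e (PiTensorProduct.tprod κ (s.piecewise (fun _ => x) (fun _ => y))) =
      e (PiTensorProduct.tprod κ (s'.piecewise (fun _ => x) (fun _ => y))) := by
  have hc2 : s'.card = s.card := hcard.symm
  have e₁ : {a : Fin p // a ∈ s'} ≃ {a : Fin p // a ∈ s} := Finset.equivOfCardEq hc2
  have e₂ : {a : Fin p // ¬ a ∈ s'} ≃ {a : Fin p // ¬ a ∈ s} := by
    refine ((Equiv.subtypeEquivRight ?_).trans (Finset.equivOfCardEq (s := s'ᶜ) (t := sᶜ) ?_)).trans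
      (Equiv.subtypeEquivRight ?_)
    · intro a; simp [Finset.mem_compl]
    · rw [Finset.card_compl, Finset.card_compl, hc2]
    · intro a; simp [Finset.mem_compl]
  let σ : Equiv.Perm (Fin p) := Equiv.subtypeCongr e₁ e₂
  have hmem : ∀ i : Fin p, σ i ∈ s ↔ i ∈ s' := by
    intro i
    by_cases hi : i ∈ s'
    · have : σ i = (e₁ ⟨i, hi⟩ : Fin p) := by
        simp only [σ, Equiv.subtypeCongr, Equiv.trans_apply,
          Equiv.sumCompl_symm_apply_of_pos hi, Equiv.sumCongr_apply, Sum.map_inl,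
          Equiv.sumCompl_apply_inl]
      rw [this]
      exact iff_of_true (e₁ ⟨i, hi⟩).2 hi
    · have : σ i = (e₂ ⟨i, hi⟩ : Fin p) := by
        simp only [σ, Equiv.subtypeCongr, Equiv.trans_apply,
          Equiv.sumCompl_symm_apply_of_neg hi, Equiv.sumCongr_apply, Sum.map_inr,
          Equiv.sumCompl_apply_inr]
      rw [this]
      exact iff_of_false (e₂ ⟨i, hi⟩).2 hi
  have hfun : (s.piecewise (fun _ => x) (fun _ => y)) ∘ σ
      = s'.piecewise (fun _ => x) (fun _ => y) := by
    funext i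
    by_cases hi : i ∈ s'
    · simp [Finset.piecewise, Function.comp_apply, (hmem i).mpr hi, hi]
    · simp [Finset.piecewise, Function.comp_apply, hi, (hmem i).not.mpr hi]
  rw [← hfun, tprod_perm hp hperf eM e σ]

theorem psi_add (hp : p.Prime) (hchar : (p : κ) = 0)
    (hperf : Function.Bijective (fun x : κ => x ^ p))
    (eM : (L ⊗[κ] M) ≃ₗ[κ] κ) (e : (⨂[κ] (_ : Fin p), L) ≃ₗ[κ] κ) (x y : L) :
    e (PiTensorProduct.tprod κ (fun _ : Fin p => x + y)) =
      e (PiTensorProduct.tprod κ (fun _ : Fin p => x)) +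
        e (PiTensorProduct.tprod κ (fun _ : Fin p => y)) := by
  have hexp : (PiTensorProduct.tprod κ (fun _ : Fin p => x + y)) =
      ∑ s : Finset (Fin p),
        PiTensorProduct.tprod κ (s.piecewise (fun _ => x) (fun _ => y)) := by
    have := MultilinearMap.map_add_univ (PiTensorProduct.tprod κ (s := fun _ : Fin p => L))
      (fun _ => x) (fun _ => y)
    simpa [Pi.add_def] using this
  rw [hexp, map_sum]
  -- group the sum by cardinality
  have hmaps : ∀ s : Finset (Fin p), s ∈ Finset.univ → s.card ∈ Finset.range (p + 1) := by
    intro s _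
    have := Finset.card_le_univ s
    simp only [Finset.mem_range]
    have hle : s.card ≤ p := by simpa using this
    omega
  have hre := Finset.sum_fiberwise_of_maps_to hmaps
    (fun s : Finset (Fin p) => e (PiTensorProduct.tprod κ (s.piecewise (fun _ => x) (fun _ => y))))
  rw [← hre]
  have hinner : ∀ k ∈ Finset.range (p + 1),
      (∑ s ∈ Finset.univ.filter (fun s : Finset (Fin p) => s.card = k),
        e (PiTensorProduct.tprod κ (s.piecewise (fun _ => x) (fun _ => y)))) =
      (if k = 0 then e (PiTensorProduct.tprod κ (fun _ : Fin p => y)) else 0) +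
        (if k = p then e (PiTensorProduct.tprod κ (fun _ : Fin p => x)) else 0) := by
    intro k hk
    rcases eq_or_ne k 0 with rfl | hk0
    · have hfil : Finset.univ.filter (fun s : Finset (Fin p) => s.card = 0) = {∅} := by
        ext s; simp [Finset.card_eq_zero]
      rw [hfil, Finset.sum_singleton, if_pos rfl, if_neg (Ne.symm hp.ne_zero)]
      simp
    rcases eq_or_ne k p with hkeqp | hkp
    · have hfil : Finset.univ.filter (fun s : Finset (Fin p) => s.card = p) = {Finset.univ} := by
        ext s
        simp only [Finset.mem_filter, Finset.mem_univ, true_and, Finset.mem_singleton]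
        rw [← Finset.card_eq_iff_eq_univ, Fintype.card_fin]
      rw [hkeqp, hfil, Finset.sum_singleton, if_neg hp.ne_zero, if_pos rfl]
      simp
    · rw [if_neg hk0, if_neg hkp, add_zero]
      rcases (Finset.univ.filter (fun s : Finset (Fin p) => s.card = k)).eq_empty_or_nonempty with
        hemp | ⟨s₀, hs₀⟩
      · rw [hemp, Finset.sum_empty]
      · have hs₀card : s₀.card = k := (Finset.mem_filter.mp hs₀).2
        have hall : ∀ s ∈ Finset.univ.filter (fun s : Finset (Fin p) => s.card = k),
            e (PiTensorProduct.tprod κ (s.piecewise (fun _ => x) (fun _ => y))) =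
            e (PiTensorProduct.tprod κ (s₀.piecewise (fun _ => x) (fun _ => y))) := by
          intro s hs
          exact tprod_card hp hperf eM e x y
            (((Finset.mem_filter.mp hs).2).trans hs₀card.symm)
        rw [Finset.sum_congr rfl hall, Finset.sum_const]
        have hkp' : k < p := by
          simp only [Finset.mem_range] at hk
          omega
        obtain ⟨m, hm⟩ := hp.dvd_choose_self hk0 hkp'
        have hcount : (Finset.univ.filter (fun s : Finset (Fin p) => s.card = k)).card
            = p.choose k := by
          rw [← Finset.powerset_univ, ← Finset.powersetCard_eq_filter,
            Finset.card_powersetCard, Finset.card_univ, Fintype.card_fin]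
        rw [hcount, hm, nsmul_eq_mul, Nat.cast_mul, hchar]
        simp
  rw [Finset.sum_congr rfl hinner, Finset.sum_add_distrib,
    Finset.sum_ite_eq' (Finset.range (p + 1)) 0, Finset.sum_ite_eq' (Finset.range (p + 1)) p,
    if_pos (by simp [hp.pos]), if_pos (by simp)]
  ring

theorem psi_smul (hp : p.Prime)
    (e : (⨂[κ] (_ : Fin p), L) ≃ₗ[κ] κ) (r : κ) (x : L) :
    e (PiTensorProduct.tprod κ (fun _ : Fin p => r • x)) =
      r ^ p * e (PiTensorProduct.tprod κ (fun _ : Fin p => x)) := by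
  have := MultilinearMap.map_smul_univ (PiTensorProduct.tprod κ (s := fun _ : Fin p => L))
    (fun _ => r) (fun _ => x)
  rw [this, map_smul, smul_eq_mul]
  congr 1
  rw [Finset.prod_const, Finset.card_univ, Fintype.card_fin]

theorem psi_zero (hp : p.Prime) (e : (⨂[κ] (_ : Fin p), L) ≃ₗ[κ] κ) :
    e (PiTensorProduct.tprod κ (fun _ : Fin p => (0 : L))) = 0 := by
  rw [MultilinearMap.map_coord_zero (i := ⟨0, hp.pos⟩) _ rfl, map_zero]

theorem psi_inj (hp : p.Prime) (hperf : Function.Bijective (fun x : κ => x ^ p))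
    (eM : (L ⊗[κ] M) ≃ₗ[κ] κ) (e : (⨂[κ] (_ : Fin p), L) ≃ₗ[κ] κ) {x : L}
    (hx : e (PiTensorProduct.tprod κ (fun _ : Fin p => x)) = 0) : x = 0 := by
  have htp : PiTensorProduct.tprod κ (fun _ : Fin p => x) = 0 := by
    apply e.injective
    rw [hx, map_zero]
  refine sep eM fun m => ?_
  -- apply the product-of-functionals form
  have happ := congrArg (PiTensorProduct.lift
    ((MultilinearMap.mkPiAlgebra κ (Fin p) κ).compLinearMap (fun _ => gm eM m))) htp
  rw [map_zero, PiTensorProduct.lift.tprod, MultilinearMap.compLinearMap_apply,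
    MultilinearMap.mkPiAlgebra_apply] at happ
  simp only [gm, LinearMap.coe_comp, Function.comp_apply, LinearMap.flip_apply,
    TensorProduct.mk_apply, LinearEquiv.coe_coe, Finset.prod_const, Finset.card_univ,
    Fintype.card_fin] at happ
  -- happ : eM (x ⊗ₜ m) ^ p = 0
  have := hperf.injective (a₁ := eM (x ⊗ₜ m)) (a₂ := 0)
  simp only [zero_pow hp.ne_zero] at this
  exact this happ

theorem psi_surj (hp : p.Prime) (hchar : (p : κ) = 0)
    (hperf : Function.Bijective (fun x : κ => x ^ p))
    (eM : (L ⊗[κ] M) ≃ₗ[κ] κ) (e : (⨂[κ] (_ : Fin p), L) ≃ₗ[κ] κ) (c : κ) :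
    ∃ x : L, e (PiTensorProduct.tprod κ (fun _ : Fin p => x)) = c := by
  set z : Fin p := ⟨0, hp.pos⟩ with hzdef
  set ψ : L → κ := fun x => e (PiTensorProduct.tprod κ (fun _ : Fin p => x)) with hψ
  set I : Ideal κ :=
    { carrier := Set.range ψ
      add_mem' := by
        rintro a b ⟨xa, rfl⟩ ⟨xb, rfl⟩
        exact ⟨xa + xb, psi_add hp hchar hperf eM e xa xb⟩
      zero_mem' := ⟨0, psi_zero hp e⟩
      smul_mem' := by
        rintro c a ⟨xa, rfl⟩
        obtain ⟨b, hb⟩ := hperf.surjective c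
        refine ⟨b • xa, ?_⟩
        show e _ = _
        rw [psi_smul hp e b xa]
        simp only at hb
        rw [hb, smul_eq_mul]
    } with hI
  -- the key scaling identity
  have hkey : ∀ (m : M) (v : Fin p → L) (s : Finset (Fin p)), z ∉ s →
      (eM (v z ⊗ₜ m)) ^ s.card • PiTensorProduct.tprod κ v =
      (∏ j ∈ s, eM (v j ⊗ₜ m)) •
        PiTensorProduct.tprod κ (fun i => if i ∈ s then v z else v i) := by
    intro m v s
    induction s using Finset.induction_on with
    | empty => intro _; simp
    | @insert a s ha IH =>
        intro hz
        have hza : z ≠ a := fun h => hz (h ▸ Finset.mem_insert_self a s)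
        have hzs : z ∉ s := fun h => hz (Finset.mem_insert_of_mem h)
        have hnotmem : a ∉ s := ha
        rw [Finset.card_insert_of_notMem ha, pow_succ', mul_smul, IH hzs, smul_comm]
        have h1 : eM (v z ⊗ₜ m) •
              PiTensorProduct.tprod κ (fun i => if i ∈ s then v z else v i)
            = eM (v a ⊗ₜ m) •
              PiTensorProduct.tprod κ (fun i => if i ∈ insert a s then v z else v i) := by
          conv_lhs =>
            rw [← Function.update_eq_self a (fun i => if i ∈ s then v z else v i)]
          rw [if_neg ha, ← MultilinearMap.map_update_smul, rk1 hp hperf eM (v z) (v a) m,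
            MultilinearMap.map_update_smul]
          have hupd : Function.update (fun i => if i ∈ s then v z else v i) a (v z)
              = fun i => if i ∈ insert a s then v z else v i := by
            funext i
            rcases eq_or_ne i a with rfl | hia
            · simp
            · simp [Function.update_of_ne hia, Finset.mem_insert, hia]
          rw [hupd]
        rw [h1, smul_smul, Finset.prod_insert ha, mul_comm]
  -- I = ⊤
  have hItop : I = ⊤ := by
    by_contra hne
    obtain ⟨q, hqmax, hIq⟩ := Ideal.exists_le_maximal I hne
    haveI hqp : q.IsPrime := hqmax.isPrime
    have hex : ∃ v : Fin p → L, e (PiTensorProduct.tprod κ v) ∉ q := by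
      by_contra hno
      push_neg at hno
      have hallq : ∀ t : ⨂[κ] (_ : Fin p), L, e t ∈ q := by
        intro t
        induction t using PiTensorProduct.induction_on with
        | smul_tprod r f =>
            rw [map_smul, smul_eq_mul]
            exact Ideal.mul_mem_left q r (hno f)
        | add t₁ t₂ h₁ h₂ =>
            rw [map_add]
            exact q.add_mem h₁ h₂
      have h1q : (1 : κ) ∈ q := by
        have := hallq (e.symm 1)
        rwa [e.apply_symm_apply] at this
      exact hqmax.ne_top (Ideal.eq_top_iff_one q |>.mpr h1q)
    obtain ⟨v, hv⟩ := hex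
    -- part (a)
    have hA : ∀ m : M, eM (v z ⊗ₜ m) ∈ q := by
      intro m
      have hz' : z ∉ Finset.univ.erase z := Finset.notMem_erase z _
      have hkz := hkey m v (Finset.univ.erase z) hz'
      have hcardz : (Finset.univ.erase z).card = p - 1 := by
        rw [Finset.card_erase_of_mem (Finset.mem_univ z), Finset.card_univ, Fintype.card_fin]
      have hfunz : (fun i => if i ∈ Finset.univ.erase z then v z else v i)
          = (fun _ : Fin p => v z) := by
        funext i
        rcases eq_or_ne i z with rfl | hiz
        · simp
        · simp [Finset.mem_erase, hiz]
      rw [hcardz, hfunz] at hkz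
      have hkz2 := congrArg e hkz
      rw [map_smul, map_smul, smul_eq_mul, smul_eq_mul] at hkz2
      have hrhs : (∏ j ∈ Finset.univ.erase z, eM (v j ⊗ₜ m)) *
          e (PiTensorProduct.tprod κ (fun _ : Fin p => v z)) ∈ q :=
        Ideal.mul_mem_left q _ (hIq ⟨v z, rfl⟩)
      rw [← hkz2] at hrhs
      rcases hqp.mem_or_mem hrhs with hpow | hnt
      · exact hqp.mem_of_pow_mem _ hpow
      · exact absurd hnt hv
    -- part (b)
    obtain ⟨S, hS⟩ := TensorProduct.exists_finset (eM.symm 1)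
    have hone : ∑ i ∈ S, eM (i.1 ⊗ₜ[κ] i.2) = 1 := by
      rw [← map_sum, ← hS, eM.apply_symm_apply]
    have ht : e (PiTensorProduct.tprod κ v) ∈ q := by
      have hrw : e (PiTensorProduct.tprod κ v)
          = ∑ i ∈ S, eM (i.1 ⊗ₜ[κ] i.2) * e (PiTensorProduct.tprod κ v) := by
        rw [← Finset.sum_mul, hone, one_mul]
      rw [hrw]
      refine Submodule.sum_mem q fun i _ => ?_
      have h1 : eM (i.1 ⊗ₜ[κ] i.2) • PiTensorProduct.tprod κ v
          = eM (v z ⊗ₜ[κ] i.2) • PiTensorProduct.tprod κ (Function.update v z i.1) := by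
        conv_lhs => rw [← Function.update_eq_self z v]
        rw [← MultilinearMap.map_update_smul, rk1 hp hperf eM i.1 (v z) i.2,
          MultilinearMap.map_update_smul]
      have h2 := congrArg e h1
      rw [map_smul, map_smul, smul_eq_mul, smul_eq_mul] at h2
      rw [h2]
      exact Ideal.mul_mem_right _ q (hA i.2)
    exact hv ht
  have hc : c ∈ I := by
    rw [hItop]
    trivial
  exact hc

theorem main_assembly (hp : p.Prime) (hchar : (p : κ) = 0)
    (hperf : Function.Bijective (fun x : κ => x ^ p))
    (eM : (L ⊗[κ] M) ≃ₗ[κ] κ) (e : (⨂[κ] (_ : Fin p), L) ≃ₗ[κ] κ) :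
    Nonempty (L ≃ₗ[κ] κ) := by
  rcases subsingleton_or_nontrivial κ with hsub | hnt
  · haveI := Module.subsingleton κ L
    exact ⟨LinearEquiv.ofLinear (0 : L →ₗ[κ] κ) (0 : κ →ₗ[κ] L)
      (by ext x; exact Subsingleton.elim _ _) (by ext x; exact Subsingleton.elim _ _)⟩
  · haveI : Fact p.Prime := ⟨hp⟩
    have hdvd : ringChar κ ∣ p := ringChar.dvd hchar
    have hring : ringChar κ = p := by
      rcases (Nat.Prime.eq_one_or_self_of_dvd hp _ hdvd) with h1 | hp'
      · exact absurd h1 CharP.ringChar_ne_one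
      · exact hp'
    haveI : CharP κ p := hring ▸ ringChar.charP κ
    haveI : ExpChar κ p := ExpChar.prime hp
    have hfrobbij : Function.Bijective (frobenius κ p) := by
      have : ⇑(frobenius κ p) = fun x : κ => x ^ p := by
        funext x; exact frobenius_def p x
      rw [this]; exact hperf
    let σ : κ ≃+* κ := RingEquiv.ofBijective (frobenius κ p) hfrobbij
    have hσ : ∀ r : κ, σ r = r ^ p := fun r => frobenius_def p r
    let χ : L →ₗ[κ] κ :=
      { toFun := fun x => σ.symm (e (PiTensorProduct.tprod κ (fun _ : Fin p => x)))
        map_add' := by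
          intro x y
          rw [psi_add hp hchar hperf eM e x y, map_add]
        map_smul' := by
          intro r x
          rw [psi_smul hp e r x, map_mul, RingHom.id_apply, smul_eq_mul]
          congr 1
          rw [← hσ r, RingEquiv.symm_apply_apply] }
    have hχbij : Function.Bijective χ := by
      constructor
      · intro x y hxy
        have hψ : e (PiTensorProduct.tprod κ (fun _ : Fin p => x))
            = e (PiTensorProduct.tprod κ (fun _ : Fin p => y)) := by
          have := congrArg σ hxy
          simpa [χ, RingEquiv.apply_symm_apply] using this
        have hsub := psi_add hp hchar hperf eM e (x - y) y
        rw [sub_add_cancel, hψ] at hsub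
        have : e (PiTensorProduct.tprod κ (fun _ : Fin p => x - y)) = 0 := by
          linear_combination -hsub
        have := psi_inj hp hperf eM e this
        exact sub_eq_zero.mp this
      · intro c
        obtain ⟨x, hx⟩ := psi_surj hp hchar hperf eM e (σ c)
        exact ⟨x, by simp [χ, hx]⟩
    exact ⟨LinearEquiv.ofBijective χ hχbij⟩

end Aux

/-- If `κ` is a perfect commutative ring of characteristic `p` (i.e. `p • 1 = 0` in `κ` and the
Frobenius `x ↦ x ^ p` is bijective), and `L` is an invertible `κ`-module whose `p`-fold tensor
power over `κ` is trivial (isomorphic to `κ`), then `L` is itself trivial. -/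
theorem trivial_of_pth_power_trivial (p : ℕ) (hp : p.Prime)
    (κ : Type u) [CommRing κ] (hchar : (p : κ) = 0)
    (hperf : Function.Bijective (fun x : κ => x ^ p))
    (L : Type u) [AddCommGroup L] [Module κ L] (hL : IsInvertibleModule κ L)
    (h : Nonempty ((⨂[κ] (_ : Fin p), L) ≃ₗ[κ] κ)) :
    Nonempty (L ≃ₗ[κ] κ) := by
  obtain ⟨M, _, _, ⟨eM⟩⟩ := hL
  obtain ⟨e⟩ := h
  exact main_assembly hp hchar hperf eM e
end
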